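/- For a single decision maker with finite action set A_i, finite state space Ω, and utility w_i : A_i × Ω → ℝ, the following are equivalent: (i) there is no belief μ ∈ Δ(Ω) for which a given action a_i is the unique best response; (ii) there is a mixed action α_i ∈ Δ(A_i \ {a_i}) that weakly dominates a_i, i.e., Σ_{b_i} w_i(b_i,ω)α_i(b_i) ≥ w_i(a_i,ω) for all ω ∈ Ω. -/

import Mathlib

open Finset

section aux

variable {A Ω : Type} [Fintype A] [DecidableEq A] [Nonempty A]
    [Fintype Ω] [Nonempty Ω]

/-- The linear map sending a mixed action to its payoff-difference vector. -/
noncomputable def payoffMap (w : A → Ω → ℝ) (a : A) : (A → ℝ) →ₗ[ℝ] (Ω → ℝ) where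
  toFun α := fun ω => ∑ b, α b * (w b ω - w a ω)
  map_add' x y := by
    funext ω
    simp [add_mul, Finset.sum_add_distrib]
  map_smul' r x := by
    funext ω
    simp [Finset.mul_sum, mul_assoc]

end aux

/-- for a single decision maker with finite actions `A` and
finite states `Ω`, an action `a` is never the unique best response to any
belief if and only if some mixed action supported outside `a` weakly
dominates `a`. -/
theorem stmt10 {A Ω : Type} [Fintype A] [DecidableEq A] [Nonempty A]
    [Fintype Ω] [Nonempty Ω]
    (w : A → Ω → ℝ) (a : A) :
    (¬ ∃ μ : Ω → ℝ, (∀ ω, 0 ≤ μ ω) ∧ (∑ ω, μ ω = 1) ∧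
        ∀ b : A, b ≠ a → ∑ ω, w b ω * μ ω < ∑ ω, w a ω * μ ω) ↔
    (∃ α : A → ℝ, (∀ b, 0 ≤ α b) ∧ α a = 0 ∧ (∑ b, α b = 1) ∧
        ∀ ω, w a ω ≤ ∑ b, α b * w b ω) := by
  constructor
  · -- hard direction: no belief ⇒ dominating mixed action
    intro hno
    classical
    by_cases hB : ∃ b : A, b ≠ a
    · -- main case
      by_contra hnoα
      -- the set of feasible mixed actions
      set D : Set (A → ℝ) := {α | (∀ b, 0 ≤ α b) ∧ α a = 0 ∧ ∑ b, α b = 1} with hD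
      set L := payoffMap w a with hLdef
      have hLval : ∀ α : A → ℝ, ∀ ω, L α ω = ∑ b, α b * (w b ω - w a ω) := by
        intro α ω; rfl
      -- D is convex
      have hDconv : Convex ℝ D := by
        intro x hx y hy s t hs ht hst
        refine ⟨fun b => add_nonneg (mul_nonneg hs (hx.1 b)) (mul_nonneg ht (hy.1 b)), ?_, ?_⟩
        · simp [hx.2.1, hy.2.1]
        · simp only [Pi.add_apply, Pi.smul_apply, smul_eq_mul, Finset.sum_add_distrib,
            ← Finset.mul_sum, hx.2.2, hy.2.2]
          linarith
      -- D is compact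
      have hDcpt : IsCompact D := by
        have hsub : D ⊆ stdSimplex ℝ A := fun x hx => ⟨hx.1, hx.2.2⟩
        have hDeq : D = (⋂ b, {α : A → ℝ | 0 ≤ α b}) ∩
            ({α : A → ℝ | α a = 0} ∩ {α : A → ℝ | ∑ b, α b = 1}) := by
          ext α
          simp only [hD, Set.mem_setOf_eq, Set.mem_inter_iff, Set.mem_iInter]
        have hclosed : IsClosed D := by
          rw [hDeq]
          exact (isClosed_iInter fun b =>
              isClosed_le continuous_const (continuous_apply b)).inter
            ((isClosed_eq (continuous_apply a) continuous_const).inter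
              (isClosed_eq (by continuity) continuous_const))
        exact (isCompact_stdSimplex ℝ A).of_isClosed_subset hclosed hsub
      -- the image C = L '' D
      have hCconv : Convex ℝ (L '' D) := hDconv.linear_image L
      have hLcont : Continuous L := L.continuous_of_finiteDimensional
      have hCcpt : IsCompact (L '' D) := hDcpt.image hLcont
      -- the nonnegative orthant
      set K : Set (Ω → ℝ) := {x | ∀ ω, 0 ≤ x ω} with hK
      have hKconv : Convex ℝ K := by
        intro x hx y hy s t hs ht hst ω
        exact add_nonneg (mul_nonneg hs (hx ω)) (mul_nonneg ht (hy ω))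
      have hKclosed : IsClosed K := by
        have hKeq : K = ⋂ ω, {x : Ω → ℝ | 0 ≤ x ω} := by
          ext x
          simp only [hK, Set.mem_setOf_eq, Set.mem_iInter]
        rw [hKeq]
        exact isClosed_iInter fun ω => isClosed_le continuous_const (continuous_apply ω)
      -- disjointness from ¬RHS
      have hdisj : Disjoint (L '' D) K := by
        rw [Set.disjoint_left]
        rintro x ⟨α, hα, rfl⟩ hxK
        refine hnoα ⟨α, hα.1, hα.2.1, hα.2.2, fun ω => ?_⟩
        have := hxK ω
        rw [hLval] at this
        have hexp : ∑ b, α b * (w b ω - w a ω)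
            = (∑ b, α b * w b ω) - w a ω := by
          simp only [mul_sub, Finset.sum_sub_distrib, ← Finset.sum_mul, hα.2.2, one_mul]
        rw [hexp] at this
        linarith
      -- separate
      obtain ⟨f, u, v, hfu, huv, hfv⟩ :=
        geometric_hahn_banach_compact_closed hCconv hCcpt hKconv hKclosed hdisj
      -- v < f 0 = 0
      have hv0 : v < 0 := by
        have := hfv 0 (fun ω => le_refl 0)
        simpa using this
      -- f is nonnegative on K
      have hfK : ∀ y ∈ K, (0:ℝ) ≤ f y := by
        intro y hy
        by_contra hneg
        push_neg at hneg
        obtain ⟨t, ht⟩ : ∃ t : ℝ, 0 < t ∧ t * f y < v := by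
          refine ⟨(v - 1) / f y, div_pos_iff.2 (Or.inr ⟨by linarith, hneg⟩), ?_⟩
          rw [div_mul_cancel₀ _ (ne_of_lt hneg)]
          linarith
        have hty : t • y ∈ K := fun ω => mul_nonneg ht.1.le (hy ω)
        have := hfv _ hty
        rw [map_smul, smul_eq_mul] at this
        linarith [ht.2]
      -- the separating belief
      set μ : Ω → ℝ := fun ω => f (Pi.single ω 1) with hμ
      have hμpos : ∀ ω, 0 ≤ μ ω := by
        intro ω
        refine hfK _ ?_
        intro j
        simp only [Pi.single_apply]
        split <;> norm_num
      have hfx : ∀ x : Ω → ℝ, f x = ∑ ω, μ ω * x ω := by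
        intro x
        have hx : x = ∑ ω, x ω • (Pi.single ω 1 : Ω → ℝ) := by
          funext j
          simp [Pi.single_apply, Finset.sum_apply, Finset.sum_ite_eq]
        conv_lhs => rw [hx]
        rw [map_sum]
        refine Finset.sum_congr rfl fun ω _ => ?_
        rw [map_smul, smul_eq_mul, mul_comm]
      -- L of a pure action b ∈ C, and strictly negative under f
      have hneg : ∀ b : A, b ≠ a → ∑ ω, μ ω * (w b ω - w a ω) < 0 := by
        intro b hb
        have hmem : (fun ω => w b ω - w a ω) ∈ L '' D := by
          refine ⟨fun c => if c = b then 1 else 0, ⟨fun c => by positivity, ?_, ?_⟩, ?_⟩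
          · exact if_neg (Ne.symm hb)
          · simp [Finset.sum_ite_eq']
          · funext ω
            rw [hLval]
            simp [ite_mul, Finset.sum_ite_eq']
        have := hfu _ hmem
        rw [hfx] at this
        linarith
      -- total mass is positive
      have hsum : 0 < ∑ ω, μ ω := by
        rcases (Finset.sum_nonneg (fun ω _ => hμpos ω)).lt_or_eq with h | h
        · exact h
        · exfalso
          have hall : ∀ ω, μ ω = 0 := by
            intro ω
            have := Finset.sum_eq_zero_iff_of_nonneg (fun ω _ => hμpos ω) |>.1 h.symm
            exact this ω (Finset.mem_univ ω)
          obtain ⟨b, hb⟩ := hB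
          have := hneg b hb
          simp [hall] at this
      -- contradiction with hno
      refine hno ⟨fun ω => μ ω / ∑ ω', μ ω', fun ω => div_nonneg (hμpos ω) hsum.le, ?_, ?_⟩
      · rw [← Finset.sum_div, div_self hsum.ne']
      · intro b hb
        have h1 := hneg b hb
        have h2 : ∑ ω, μ ω * (w b ω - w a ω)
            = (∑ ω, w b ω * μ ω) - ∑ ω, w a ω * μ ω := by
          rw [← Finset.sum_sub_distrib]
          exact Finset.sum_congr rfl fun ω _ => by ring
        rw [h2] at h1
        have h3 : (∑ ω, w b ω * μ ω) < ∑ ω, w a ω * μ ω := by linarith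
        have h4 : ∀ c : A, ∑ ω, w c ω * (μ ω / ∑ ω', μ ω')
            = (∑ ω, w c ω * μ ω) / ∑ ω', μ ω' := by
          intro c
          rw [Finset.sum_div]
          exact Finset.sum_congr rfl fun ω _ => by ring
        rw [h4, h4]
        gcongr
    · -- degenerate case: A = {a}; LHS hypothesis is contradictory
      exfalso
      push_neg at hB
      classical
      obtain ⟨ω₀⟩ := ‹Nonempty Ω›
      refine hno ⟨fun ω => if ω = ω₀ then 1 else 0, fun ω => by positivity,
        by simp [Finset.sum_ite_eq'], ?_⟩
      intro b hb
      exact absurd (hB b) hb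
  · -- easy direction: dominating mixed action ⇒ no belief
    rintro ⟨α, hα0, hαa, hαsum, hdom⟩ ⟨μ, hμ0, hμsum, hμlt⟩
    -- expected value of a under μ
    have hval : (∑ ω, w a ω * μ ω) ≤ ∑ b, α b * ∑ ω, w b ω * μ ω := by
      calc (∑ ω, w a ω * μ ω) ≤ ∑ ω, (∑ b, α b * w b ω) * μ ω := by
            refine Finset.sum_le_sum fun ω _ => mul_le_mul_of_nonneg_right (hdom ω) (hμ0 ω)
        _ = ∑ ω, ∑ b, α b * (w b ω * μ ω) := by
            refine Finset.sum_congr rfl fun ω _ => ?_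
            rw [Finset.sum_mul]
            exact Finset.sum_congr rfl fun b _ => by ring
        _ = ∑ b, ∑ ω, α b * (w b ω * μ ω) := Finset.sum_comm
        _ = ∑ b, α b * ∑ ω, w b ω * μ ω := by
            refine Finset.sum_congr rfl fun b _ => ?_
            rw [Finset.mul_sum]
    -- but each term is at most α b * value a, strictly somewhere
    obtain ⟨b₀, _, hb₀⟩ : ∃ b ∈ Finset.univ, 0 < α b := by
      by_contra hc
      push_neg at hc
      have : (∑ b, α b) ≤ 0 := Finset.sum_nonpos fun b hb => hc b hb
      linarith [hαsum]
    have hb₀ne : b₀ ≠ a := fun h => by rw [h, hαa] at hb₀; exact lt_irrefl 0 hb₀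
    have hlt : ∑ b, α b * ∑ ω, w b ω * μ ω < ∑ b, α b * ∑ ω, w a ω * μ ω := by
      refine Finset.sum_lt_sum (fun b _ => ?_) ⟨b₀, Finset.mem_univ b₀, ?_⟩
      · by_cases hb : b = a
        · simp [hb, hαa]
        · exact mul_le_mul_of_nonneg_left (hμlt b hb).le (hα0 b)
      · exact mul_lt_mul_of_pos_left (hμlt b₀ hb₀ne) hb₀
    have : ∑ b, α b * ∑ ω, w a ω * μ ω = ∑ ω, w a ω * μ ω := by
      rw [← Finset.sum_mul, hαsum, one_mul]
    linarith
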